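/- A topological space (X, 𝒯^α) is locally S-closed if and only if (X, 𝒯) is locally S-closed. -/

import Mathlib

open Set TopologicalSpace

universe u v

variable {X : Type u} {Y : Type v}

/-- A set is an α-set (α-open) w.r.t. the topology `T` if `A ⊆ Int (Cl (Int A))`. -/
def AlphaOpen (T : TopologicalSpace X) (A : Set X) : Prop :=
  letI := T
  A ⊆ interior (closure (interior A))

/-- The α-topology `𝒯^α`, whose open sets are exactly the α-sets of `T`. -/
def alphaTop (T : TopologicalSpace X) : TopologicalSpace X :=
  letI := T
  { IsOpen := fun A => A ⊆ interior (closure (interior A))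
    isOpen_univ := by simp
    isOpen_inter := by
      intro A B hA hB
      have hsub : interior (closure (interior A)) ∩ interior (closure (interior B)) ⊆
          closure (interior (A ∩ B)) := by
        intro x hx
        have h1 : interior (closure (interior B)) ∩ closure (interior A) ⊆
            closure (interior (closure (interior B)) ∩ interior A) :=
          isOpen_interior.inter_closure
        have h2 : interior (closure (interior B)) ∩ interior A ⊆
            closure (interior A ∩ interior B) := by
          intro y hy
          have h : interior A ∩ closure (interior B) ⊆ closure (interior A ∩ interior B) :=
            isOpen_interior.inter_closure
          exact h ⟨hy.2, interior_subset hy.1⟩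
        have h3 : closure (interior (closure (interior B)) ∩ interior A) ⊆
            closure (interior A ∩ interior B) := by
          calc closure (interior (closure (interior B)) ∩ interior A)
              ⊆ closure (closure (interior A ∩ interior B)) := closure_mono h2
            _ = closure (interior A ∩ interior B) := closure_closure
        have hx' : x ∈ closure (interior A ∩ interior B) :=
          h3 (h1 ⟨hx.2, interior_subset hx.1⟩)
        rwa [← interior_inter] at hx'
      intro x hx
      exact interior_maximal hsub (isOpen_interior.inter isOpen_interior) ⟨hA hx.1, hB hx.2⟩
    isOpen_sUnion := by
      intro S hS x hx
      obtain ⟨t, htS, hxt⟩ := hx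
      have h : interior (closure (interior t)) ⊆ interior (closure (interior (⋃₀ S))) :=
        interior_mono (closure_mono (interior_mono (subset_sUnion_of_mem htS)))
      exact h (hS t htS hxt) }

/-- `A` is semi-open w.r.t. `T` if `A ⊆ Cl (Int A)`. -/
def SemiOpen (T : TopologicalSpace X) (A : Set X) : Prop :=
  letI := T
  A ⊆ closure (interior A)

/-- `A` is semi-closed if its complement is semi-open. -/
def SemiClosed (T : TopologicalSpace X) (A : Set X) : Prop :=
  SemiOpen T Aᶜ

/-- The semi-closure of `A`: the intersection of all semi-closed sets containing `A`. -/
def sCl (T : TopologicalSpace X) (A : Set X) : Set X :=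
  ⋂₀ {C | SemiClosed T C ∧ A ⊆ C}

/-- `A` is sg-closed if `sCl A ⊆ U` whenever `A ⊆ U` with `U` semi-open. -/
def SgClosed (T : TopologicalSpace X) (A : Set X) : Prop :=
  ∀ U : Set X, SemiOpen T U → A ⊆ U → sCl T A ⊆ U

/-- `A` is sg-open if its complement is sg-closed. -/
def SgOpen (T : TopologicalSpace X) (A : Set X) : Prop :=
  SgClosed T Aᶜ

/-- `A` is regular closed w.r.t. `T` if `A = Cl (Int A)`. -/
def RegClosed (T : TopologicalSpace X) (A : Set X) : Prop :=
  letI := T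
  A = closure (interior A)

/-- A family `𝒱` refines a family `𝒰` if every member of `𝒱` is contained in a member of `𝒰`. -/
def Refines (𝒱 𝒰 : Set (Set X)) : Prop :=
  ∀ V ∈ 𝒱, ∃ U ∈ 𝒰, V ⊆ U

/-- A family of sets is locally finite if every point has a neighbourhood
meeting only finitely many members. -/
def LocFinite (T : TopologicalSpace X) (𝒱 : Set (Set X)) : Prop :=
  ∀ x : X, ∃ N ∈ @nhds X T x, {V ∈ 𝒱 | (V ∩ N).Nonempty}.Finite

/-- A family of sets is locally countable if every point has a neighbourhood
meeting only countably many members. -/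
def LocCountable (T : TopologicalSpace X) (𝒱 : Set (Set X)) : Prop :=
  ∀ x : X, ∃ N ∈ @nhds X T x, {V ∈ 𝒱 | (V ∩ N).Nonempty}.Countable

/-- A family of sets is discrete if every point has a neighbourhood
meeting at most one member. -/
def DiscreteFam (T : TopologicalSpace X) (𝒱 : Set (Set X)) : Prop :=
  ∀ x : X, ∃ N ∈ @nhds X T x, {V ∈ 𝒱 | (V ∩ N).Nonempty}.Subsingleton

/-- A family is σ-discrete if it is a countable union of discrete families. -/
def SigmaDiscrete (T : TopologicalSpace X) (𝒱 : Set (Set X)) : Prop :=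
  ∃ 𝒲 : ℕ → Set (Set X), 𝒱 = ⋃ n, 𝒲 n ∧ ∀ n, DiscreteFam T (𝒲 n)

/-- A family is closure-preserving if for every subfamily the closure of the
union is the union of the closures. -/
def ClosurePreserving (T : TopologicalSpace X) (𝒲 : Set (Set X)) : Prop :=
  letI := T
  ∀ 𝒲' ⊆ 𝒲, closure (⋃₀ 𝒲') = ⋃ W ∈ 𝒲', closure W

/-- A family is σ-closure-preserving if it is a countable union of
closure-preserving families. -/
def SigmaClosurePreserving (T : TopologicalSpace X) (𝒱 : Set (Set X)) : Prop :=
  ∃ 𝒲 : ℕ → Set (Set X), 𝒱 = ⋃ n, 𝒲 n ∧ ∀ n, ClosurePreserving T (𝒲 n)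

/-- Semi-compact: every semi-open cover has a finite subcover. -/
def SemiCompact (T : TopologicalSpace X) : Prop :=
  ∀ 𝒰 : Set (Set X), (∀ U ∈ 𝒰, SemiOpen T U) → ⋃₀ 𝒰 = univ →
    ∃ 𝒱 ⊆ 𝒰, 𝒱.Finite ∧ ⋃₀ 𝒱 = univ

/-- S-closed: for every semi-open cover there is a finite subfamily
whose closures cover. -/
def SClosed (T : TopologicalSpace X) : Prop :=
  letI := T
  ∀ 𝒰 : Set (Set X), (∀ U ∈ 𝒰, SemiOpen T U) → ⋃₀ 𝒰 = univ →
    ∃ 𝒱 ⊆ 𝒰, 𝒱.Finite ∧ (⋃ V ∈ 𝒱, closure V) = univ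

/-- s-closed: for every semi-open cover there is a finite subfamily
whose semi-closures cover. -/
def SmallSClosed (T : TopologicalSpace X) : Prop :=
  ∀ 𝒰 : Set (Set X), (∀ U ∈ 𝒰, SemiOpen T U) → ⋃₀ 𝒰 = univ →
    ∃ 𝒱 ⊆ 𝒰, 𝒱.Finite ∧ (⋃ V ∈ 𝒱, sCl T V) = univ

/-- rc-Lindelöf: every regular closed cover has a countable subcover. -/
def RcLindelof (T : TopologicalSpace X) : Prop :=
  ∀ 𝒰 : Set (Set X), (∀ U ∈ 𝒰, RegClosed T U) → ⋃₀ 𝒰 = univ →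
    ∃ 𝒱 ⊆ 𝒰, 𝒱.Countable ∧ ⋃₀ 𝒱 = univ

/-- sg-compact: every sg-open cover has a finite subcover. -/
def SgCompact (T : TopologicalSpace X) : Prop :=
  ∀ 𝒰 : Set (Set X), (∀ U ∈ 𝒰, SgOpen T U) → ⋃₀ 𝒰 = univ →
    ∃ 𝒱 ⊆ 𝒰, 𝒱.Finite ∧ ⋃₀ 𝒱 = univ

/-- `A` is S-closed relative to `X`: every cover of `A` by semi-open sets of `X`
has a finite subfamily whose closures cover `A`. -/
def SClosedRel (T : TopologicalSpace X) (A : Set X) : Prop :=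
  letI := T
  ∀ 𝒰 : Set (Set X), (∀ U ∈ 𝒰, SemiOpen T U) → A ⊆ ⋃₀ 𝒰 →
    ∃ 𝒱 ⊆ 𝒰, 𝒱.Finite ∧ A ⊆ ⋃ V ∈ 𝒱, closure V

/-- `A` is s-closed relative to `X`: every cover of `A` by semi-open sets of `X`
has a finite subfamily whose semi-closures cover `A`. -/
def SmallSClosedRel (T : TopologicalSpace X) (A : Set X) : Prop :=
  ∀ 𝒰 : Set (Set X), (∀ U ∈ 𝒰, SemiOpen T U) → A ⊆ ⋃₀ 𝒰 →
    ∃ 𝒱 ⊆ 𝒰, 𝒱.Finite ∧ A ⊆ ⋃ V ∈ 𝒱, sCl T V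

/-- Locally S-closed: every point has a neighbourhood which is S-closed relative to `X`. -/
def LocallySClosed (T : TopologicalSpace X) : Prop :=
  ∀ x : X, ∃ N ∈ @nhds X T x, SClosedRel T N

/-- Locally s-closed: every point has a neighbourhood which is s-closed relative to `X`. -/
def LocallySmallSClosed (T : TopologicalSpace X) : Prop :=
  ∀ x : X, ∃ N ∈ @nhds X T x, SmallSClosedRel T N

/-- para-S-closed: every semi-open cover has a locally finite refinement by
semi-open sets whose union is dense. -/
def ParaSClosed (T : TopologicalSpace X) : Prop :=
  letI := T
  ∀ 𝒰 : Set (Set X), (∀ U ∈ 𝒰, SemiOpen T U) → ⋃₀ 𝒰 = univ →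
    ∃ 𝒱 : Set (Set X), (∀ V ∈ 𝒱, SemiOpen T V) ∧ LocFinite T 𝒱 ∧ Refines 𝒱 𝒰 ∧
      closure (⋃₀ 𝒱) = univ

/-- para-rc-Lindelöf: every regular closed cover has a locally countable
refinement by regular closed sets. -/
def ParaRcLindelof (T : TopologicalSpace X) : Prop :=
  ∀ 𝒰 : Set (Set X), (∀ U ∈ 𝒰, RegClosed T U) → ⋃₀ 𝒰 = univ →
    ∃ 𝒱 : Set (Set X), (∀ V ∈ 𝒱, RegClosed T V) ∧ LocCountable T 𝒱 ∧ Refines 𝒱 𝒰 ∧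
      ⋃₀ 𝒱 = univ

/-- α-subparacompact: every α-open cover has a σ-discrete closed refinement covering `X`. -/
def AlphaSubparacompact (T : TopologicalSpace X) : Prop :=
  ∀ 𝒰 : Set (Set X), (∀ U ∈ 𝒰, AlphaOpen T U) → ⋃₀ 𝒰 = univ →
    ∃ 𝒱 : Set (Set X), (∀ V ∈ 𝒱, @IsClosed X T V) ∧ SigmaDiscrete T 𝒱 ∧ Refines 𝒱 𝒰 ∧
      ⋃₀ 𝒱 = univ

/-- gα-closed: `Cl_α A ⊆ U` whenever `A ⊆ U` with `U` α-open. -/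
def GAlphaClosed (T : TopologicalSpace X) (A : Set X) : Prop :=
  ∀ U : Set X, AlphaOpen T U → A ⊆ U → @closure X (alphaTop T) A ⊆ U

/-- α-paracompact: every α-open cover has a locally finite open refinement. -/
def AlphaParacompact (T : TopologicalSpace X) : Prop :=
  ∀ 𝒰 : Set (Set X), (∀ U ∈ 𝒰, AlphaOpen T U) → ⋃₀ 𝒰 = univ →
    ∃ 𝒱 : Set (Set X), (∀ V ∈ 𝒱, T.IsOpen V) ∧ LocFinite T 𝒱 ∧ Refines 𝒱 𝒰 ∧
      ⋃₀ 𝒱 = univ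

section Aux

variable (T : TopologicalSpace X)

lemma alphaTop_le : alphaTop T ≤ T := by
  rw [← isOpen_implies_isOpen_iff]
  intro s hs
  show s ⊆ _
  letI := T
  have : s ⊆ interior (closure (interior s)) := by
    rw [hs.interior_eq]
    exact interior_maximal subset_closure hs
  exact this

lemma nhds_le_alphaTop (x : X) : @nhds X (alphaTop T) x ≤ @nhds X T x :=
  nhds_mono (alphaTop_le T)

/-- T-closure of a semi-open set equals its α-closure. -/
lemma closure_alphaTop_of_semiOpen {V : Set X} (hV : SemiOpen T V) :
    @closure X (alphaTop T) V = @closure X T V := by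
  letI := T
  apply subset_antisymm (closure.mono (alphaTop_le T))
  intro x hx
  rw [@mem_closure_iff X (alphaTop T) x V]
  intro U hU hxU
  have hU' : U ⊆ interior (closure (interior U)) := hU
  by_contra h
  rw [Set.not_nonempty_iff_eq_empty] at h
  -- int U disjoint from V, hence from cl(int V) ⊇ V? no: open disjoint from V ⇒ disjoint from int V
  have h1 : interior U ∩ interior V = ∅ := by
    apply Set.eq_empty_of_subset_empty
    intro y hy
    exact h ▸ ⟨interior_subset hy.1, interior_subset hy.2⟩
  have h2 : Disjoint (interior V) (closure (interior U)) :=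
    (Disjoint.closure_right (Set.disjoint_iff_inter_eq_empty.2
      (by rw [Set.inter_comm] at h1; exact h1)) isOpen_interior)
  have h3 : interior (closure (interior U)) ∩ closure (interior V) = ∅ := by
    have h4 : Disjoint (interior V) (interior (closure (interior U))) :=
      h2.mono_right interior_subset
    exact (Disjoint.closure_right h4.symm isOpen_interior).inter_eq
  have hxcl : x ∈ closure (interior V) := by
    have := closure_mono hV hx; rwa [closure_closure] at this
  exact absurd (Set.eq_empty_iff_forall_notMem.1 h3 x ⟨hU' hxU, hxcl⟩) (fun q => q)

/-- Semi-open w.r.t. `T` iff semi-open w.r.t. the α-topology. -/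
lemma semiOpen_alphaTop_iff {A : Set X} :
    SemiOpen (alphaTop T) A ↔ SemiOpen T A := by
  letI := T
  constructor
  · intro hA
    have h1 : @closure X (alphaTop T) (@interior X (alphaTop T) A) ⊆
        closure (@interior X (alphaTop T) A) := closure.mono (alphaTop_le T)
    have h2 : @interior X (alphaTop T) A ⊆ closure (interior A) := by
      have hop : (alphaTop T).IsOpen (@interior X (alphaTop T) A) := @isOpen_interior X (alphaTop T) A
      have hsub : @interior X (alphaTop T) A ⊆
          interior (closure (interior (@interior X (alphaTop T) A))) := hop
      calc @interior X (alphaTop T) A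
          ⊆ interior (closure (interior (@interior X (alphaTop T) A))) := hsub
        _ ⊆ closure (interior (@interior X (alphaTop T) A)) := interior_subset
        _ ⊆ closure (interior A) := closure_mono (interior_mono (@interior_subset X (alphaTop T) A))
    calc A ⊆ @closure X (alphaTop T) (@interior X (alphaTop T) A) := hA
      _ ⊆ closure (@interior X (alphaTop T) A) := h1
      _ ⊆ closure (closure (interior A)) := closure_mono h2
      _ = closure (interior A) := closure_closure
  · intro hA
    have hio : SemiOpen T (interior A) := by
      intro y hy
      exact subset_closure (by rwa [interior_interior])
    have hsub : interior A ⊆ @interior X (alphaTop T) A :=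
      @interior_maximal X (alphaTop T) A (interior A) interior_subset
        ((alphaTop_le T) _ (@isOpen_interior X T A))
    calc A ⊆ closure (interior A) := hA
      _ = @closure X (alphaTop T) (interior A) := (closure_alphaTop_of_semiOpen T hio).symm
      _ ⊆ @closure X (alphaTop T) (@interior X (alphaTop T) A) :=
          @closure_mono X (alphaTop T) (interior A) (@interior X (alphaTop T) A) hsub

lemma sClosedRel_alphaTop_iff {N : Set X} :
    SClosedRel (alphaTop T) N ↔ SClosedRel T N := by
  letI := T
  constructor
  · intro hN 𝒰 h𝒰 hcov
    obtain ⟨𝒱, h𝒱𝒰, hfin, hsub⟩ := hN 𝒰 (fun U hU => (semiOpen_alphaTop_iff T).2 (h𝒰 U hU)) hcov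
    refine ⟨𝒱, h𝒱𝒰, hfin, ?_⟩
    refine hsub.trans (Set.iUnion₂_mono fun V hV => ?_)
    rw [closure_alphaTop_of_semiOpen T (h𝒰 V (h𝒱𝒰 hV))]
  · intro hN 𝒰 h𝒰 hcov
    obtain ⟨𝒱, h𝒱𝒰, hfin, hsub⟩ := hN 𝒰 (fun U hU => (semiOpen_alphaTop_iff T).1 (h𝒰 U hU)) hcov
    refine ⟨𝒱, h𝒱𝒰, hfin, ?_⟩
    refine hsub.trans (Set.iUnion₂_mono fun V hV => ?_)
    rw [closure_alphaTop_of_semiOpen T ((semiOpen_alphaTop_iff T).1 (h𝒰 V (h𝒱𝒰 hV)))]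

lemma sClosedRel_closure {N : Set X} (hN : SClosedRel T N) :
    SClosedRel T (@closure X T N) := by
  letI := T
  intro 𝒰 h𝒰 hcov
  obtain ⟨𝒱, h𝒱𝒰, hfin, hsub⟩ := hN 𝒰 h𝒰 ((subset_closure).trans hcov)
  refine ⟨𝒱, h𝒱𝒰, hfin, ?_⟩
  have hcl : IsClosed (⋃ V ∈ 𝒱, closure V) :=
    hfin.isClosed_biUnion fun V _ => isClosed_closure
  exact closure_minimal hsub hcl

end Aux

/-- `(X, 𝒯^α)` is locally S-closed iff `(X, 𝒯)` is locally S-closed. -/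
theorem locallySClosed_alphaTop_iff (T : TopologicalSpace X) :
    LocallySClosed (alphaTop T) ↔ LocallySClosed T := by
  letI := T
  constructor
  · intro h x
    obtain ⟨N, hN, hNS⟩ := h x
    obtain ⟨U, hUN, hU, hxU⟩ := (@mem_nhds_iff X (alphaTop T) x N).1 hN
    have hU' : U ⊆ interior (closure (interior U)) := hU
    refine ⟨closure N, ?_, sClosedRel_closure T ((sClosedRel_alphaTop_iff T).1 hNS)⟩
    rw [mem_nhds_iff]
    exact ⟨interior (closure (interior U)), by
      calc interior (closure (interior U)) ⊆ closure (interior U) := interior_subset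
        _ ⊆ closure U := closure_mono interior_subset
        _ ⊆ closure N := closure_mono hUN, isOpen_interior, hU' hxU⟩
  · intro h x
    obtain ⟨N, hN, hNS⟩ := h x
    exact ⟨N, nhds_le_alphaTop T x hN, (sClosedRel_alphaTop_iff T).2 hNS⟩
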